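/- If all riders have homogeneous carpool disutility, i.e. γ^m(d) = γ(d) for all m ∈ M and all d ∈ {1,…,A}, then for any finite route set R* with travel times t_r > 0 and positive integer capacities k*_r (in particular the output of the greedy route-capacity allocation), the program (LPk*) has an optimal solution with all entries in {0,1}. -/

import Mathlib

open Classical
noncomputable section

variable {M : Type} [Fintype M] [DecidableEq M] {R : Type} [Fintype R]

/-- the set `B` of feasible rider groups: nonempty subsets of `M` of size at most `A` -/
def Groups (M : Type) [Fintype M] [DecidableEq M] (A : ℕ) : Finset (Finset M) :=
  Finset.univ.filter fun b => b.Nonempty ∧ b.card ≤ A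

/-- the social trip value under homogeneous carpool disutility `γ`:
`V_r(b) = ∑_{m∈b} α^m − (∑_{m∈b} β^m + |b|·γ(|b|) + δ|b|)·t_r` -/
def Vhom (α β : M → ℝ) (γ : ℕ → ℝ) (δ : ℝ) (t : R → ℝ) (r : R) (b : Finset M) : ℝ :=
  (∑ m ∈ b, α m) -
    ((∑ m ∈ b, β m) + (b.card : ℝ) * γ b.card + δ * (b.card : ℝ)) * t r

/-- a vector has all its entries in `{0,1}` -/
def IsBinaryX (x : Finset M → R → ℝ) : Prop := ∀ b r, x b r = 0 ∨ x b r = 1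

/-- feasible solutions of (LPk*) -/
def LPkFeasible (A : ℕ) (k : R → ℕ) (x : Finset M → R → ℝ) : Prop :=
  (∀ b r, 0 ≤ x b r) ∧
  (∀ b r, b ∉ Groups M A → x b r = 0) ∧
  (∀ m : M, (∑ r : R, ∑ b ∈ (Groups M A).filter (fun b => m ∈ b), x b r) ≤ 1) ∧
  (∀ r : R, (∑ b ∈ Groups M A, x b r) ≤ (k r : ℝ))

/-- objective of (LPk*) -/
def LPkObj (A : ℕ) (V : R → Finset M → ℝ) (x : Finset M → R → ℝ) : ℝ :=
  ∑ b ∈ Groups M A, ∑ r : R, V r b * x b r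

/-- optimal solutions of (LPk*) -/
def LPkOptimal (A : ℕ) (V : R → Finset M → ℝ) (k : R → ℕ) (x : Finset M → R → ℝ) : Prop :=
  LPkFeasible A k x ∧ ∀ y, LPkFeasible A k y → LPkObj A V y ≤ LPkObj A V x

namespace LPkAux
open Finset

/-- total in-car cost of a group of size `d` -/
def fc (γ : ℕ → ℝ) (δ : ℝ) (d : ℕ) : ℝ := (d : ℝ) * γ d + δ * d

/-- marginal cost of the `(j+1)`-st passenger -/
def Dfc (γ : ℕ → ℝ) (δ : ℝ) (j : ℕ) : ℝ := fc γ δ (j + 1) - fc γ δ j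

lemma fc_zero (γ : ℕ → ℝ) (δ : ℝ) : fc γ δ 0 = 0 := by simp [fc]

lemma fc_eq_sum (γ : ℕ → ℝ) (δ : ℝ) (c : ℕ) :
    fc γ δ c = ∑ j ∈ Finset.range c, Dfc γ δ j := by
  induction c with
  | zero => simp [fc]
  | succ n ih => rw [Finset.sum_range_succ, ← ih, Dfc]; ring

section gam
variable {A : ℕ} {γ : ℕ → ℝ} {δ : ℝ}
variable (hA : 1 ≤ A) (hγ1 : γ 1 = 0)
  (hγ0 : ∀ d, 1 ≤ d → d ≤ A → 0 ≤ γ d)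
  (hγincr : ∀ d, 2 ≤ d → d < A → γ d - γ (d - 1) ≤ γ (d + 1) - γ d)
  (hδ : 0 ≤ δ)

include hγ1 hγ0 hγincr in
lemma gamma_inc_nonneg : ∀ d, 2 ≤ d → d ≤ A → 0 ≤ γ d - γ (d - 1) := by
  intro d
  induction d with
  | zero => omega
  | succ n ih =>
    intro h2 hle
    rcases Nat.lt_or_ge n 2 with hn | hn
    · -- n + 1 = 2, i.e. n = 1
      have : n = 1 := by omega
      subst this
      have := hγ0 2 (by omega) (by omega)
      simp [hγ1]
      linarith
    · have h1 : 0 ≤ γ n - γ (n - 1) := ih (by omega) (by omega)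
      have h2' := hγincr n (by omega) (by omega)
      have : n + 1 - 1 = n := by omega
      rw [this]
      linarith

include hγ1 hγ0 hγincr in
lemma gamma_mono : ∀ d, 1 ≤ d → d < A → γ d ≤ γ (d + 1) := by
  intro d h1 h2
  have := gamma_inc_nonneg hγ1 hγ0 hγincr (d + 1) (by omega) (by omega)
  simp only [Nat.add_sub_cancel] at this
  linarith

include hγ1 hγ0 hγincr in
lemma Dfc_mono : ∀ j, j + 2 ≤ A → Dfc γ δ j ≤ Dfc γ δ (j + 1) := by
  intro j hj
  rcases Nat.eq_zero_or_pos j with rfl | hjpos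
  · have h2 : 0 ≤ γ 2 := hγ0 2 (by omega) (by omega)
    simp only [Dfc, fc]
    push_cast
    simp [hγ1]
    linarith
  · have hconv := hγincr (j + 1) (by omega) (by omega)
    have hm1 : γ j ≤ γ (j + 1) := gamma_mono hγ1 hγ0 hγincr j hjpos (by omega)
    have hm2 : γ (j + 1) ≤ γ (j + 2) := gamma_mono hγ1 hγ0 hγincr (j + 1) (by omega) (by omega)
    have hred : (j + 1 : ℕ) - 1 = j := by omega
    rw [hred] at hconv
    simp only [Dfc, fc]
    have hj1 : ((j : ℝ)) ≥ 1 := by exact_mod_cast hjpos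
    push_cast
    nlinarith [hconv, hm1, hm2]
end gam

/-- Abel-summation inequality -/
lemma abel_ineq (g a : ℕ → ℝ) (N : ℕ)
    (hmono : ∀ i, i + 2 ≤ N → g i ≤ g (i + 1))
    (hpartial : ∀ i, i < N → 0 ≤ ∑ j ∈ Finset.range (i + 1), a j)
    (htotal : ∑ j ∈ Finset.range N, a j = 0) :
    ∑ j ∈ Finset.range N, g j * a j ≤ 0 := by
  have h := Finset.sum_range_by_parts g a N
  simp only [smul_eq_mul] at h
  rw [h, htotal, mul_zero, zero_sub, neg_nonpos]
  apply Finset.sum_nonneg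
  intro i hi
  rw [Finset.mem_range] at hi
  have h1 : g i ≤ g (i + 1) := hmono i (by omega)
  have h2 : 0 ≤ ∑ j ∈ Finset.range (i + 1), a j := hpartial i (by omega)
  exact mul_nonneg (by linarith) h2

/-- partial sums of the greedy level profile -/
lemma greedy_partial (kq S : ℕ) : ∀ i, ∑ j ∈ Finset.range i, min kq (S - j * kq) = min (i * kq) S := by
  intro i
  induction i with
  | zero => simp
  | succ n ih =>
    rw [Finset.sum_range_succ, ih]
    have : (n+1) * kq = n * kq + kq := by ring
    omega

/-- greedy profile is the cheapest : cost comparison -/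
lemma greedy_cost_le (A kq S : ℕ) (hS : S ≤ A * kq) (g : ℕ → ℝ)
    (hmono : ∀ i, i + 2 ≤ A → g i ≤ g (i + 1))
    (z : ℕ → ℕ) (hzk : ∀ j, j < A → z j ≤ kq)
    (hsum : ∑ j ∈ Finset.range A, z j = S) :
    ∑ j ∈ Finset.range A, g j * (min kq (S - j * kq) : ℕ) ≤ ∑ j ∈ Finset.range A, g j * z j := by
  have key : ∑ j ∈ Finset.range A, g j * (((min kq (S - j * kq) : ℕ) : ℝ) - z j) ≤ 0 := by
    apply abel_ineq _ _ _ hmono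
    · intro i hi
      have h1 : ∑ j ∈ Finset.range (i+1), (z j : ℝ) ≤ ∑ j ∈ Finset.range (i+1), ((min kq (S - j * kq) : ℕ) : ℝ) := by
        have hz : ∑ j ∈ Finset.range (i+1), z j ≤ min ((i+1) * kq) S := by
          have hb1 : ∑ j ∈ Finset.range (i+1), z j ≤ (i+1) * kq := by
            calc ∑ j ∈ Finset.range (i+1), z j ≤ ∑ j ∈ Finset.range (i+1), kq :=
              Finset.sum_le_sum (fun j hj => hzk j (by rw [Finset.mem_range] at hj; omega))
            _ = (i+1) * kq := by simp [mul_comm]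
          have hb2 : ∑ j ∈ Finset.range (i+1), z j ≤ S := by
            rw [← hsum]
            exact Finset.sum_le_sum_of_subset (Finset.range_subset_range.2 (by omega))
          omega
        have := greedy_partial kq S (i+1)
        calc ∑ j ∈ Finset.range (i+1), (z j : ℝ) = ((∑ j ∈ Finset.range (i+1), z j : ℕ) : ℝ) := by push_cast; ring
          _ ≤ ((min ((i+1) * kq) S : ℕ) : ℝ) := by exact_mod_cast hz
          _ = ((∑ j ∈ Finset.range (i+1), min kq (S - j * kq) : ℕ) : ℝ) := by rw [this]
          _ = _ := by push_cast; ring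
      simp only [Finset.sum_sub_distrib]
      linarith
    · have h2 : ∑ j ∈ Finset.range A, (min kq (S - j * kq) : ℕ) = S := by
        rw [greedy_partial kq S A]; omega
      simp only [Finset.sum_sub_distrib]
      have : ∑ j ∈ Finset.range A, ((min kq (S - j * kq) : ℕ) : ℝ) = (S : ℝ) := by
        exact_mod_cast congrArg (Nat.cast : ℕ → ℝ) h2
      have hz : ∑ j ∈ Finset.range A, (z j : ℝ) = (S : ℝ) := by exact_mod_cast congrArg (Nat.cast : ℕ → ℝ) hsum
      rw [this, hz]; ring
  have expand : ∑ j ∈ Finset.range A, g j * (((min kq (S - j * kq) : ℕ) : ℝ) - z j)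
      = ∑ j ∈ Finset.range A, g j * (min kq (S - j * kq) : ℕ) - ∑ j ∈ Finset.range A, g j * z j := by
    rw [← Finset.sum_sub_distrib]; congr 1; ext j; ring
  rw [expand] at key
  linarith


/-- counting residues in an initial segment -/
lemma count_res_ge_iff (S n i j : ℕ) (hn : 0 < n) (hi : i < n) :
    j + 1 ≤ ((Finset.range S).filter (fun x => x % n = i)).card ↔ i + j * n < S := by
  constructor
  · intro h
    by_contra hc
    push_neg at hc
    have hsub : ((Finset.range S).filter (fun x => x % n = i)) ⊆
        (Finset.range j).image (fun t => i + t * n) := by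
      intro x hx
      rw [Finset.mem_filter, Finset.mem_range] at hx
      obtain ⟨hxS, hxm⟩ := hx
      have hdm : n * (x / n) + x % n = x := Nat.div_add_mod x n
      have hcm : n * (x / n) = (x / n) * n := Nat.mul_comm _ _
      rw [Finset.mem_image]
      refine ⟨x / n, ?_, ?_⟩
      · rw [Finset.mem_range]
        by_contra hj
        push_neg at hj
        have hmul : j * n ≤ (x / n) * n := Nat.mul_le_mul_right n hj
        omega
      · omega
    have hcard := Finset.card_le_card hsub
    have : ((Finset.range j).image (fun t => i + t * n)).card ≤ j := by
      calc _ ≤ (Finset.range j).card := Finset.card_image_le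
        _ = j := Finset.card_range j
    omega
  · intro h
    have hsub : (Finset.range (j+1)).image (fun t => i + t * n) ⊆
        ((Finset.range S).filter (fun x => x % n = i)) := by
      intro x hx
      rw [Finset.mem_image] at hx
      obtain ⟨t, ht, rfl⟩ := hx
      rw [Finset.mem_range] at ht
      rw [Finset.mem_filter, Finset.mem_range]
      constructor
      · have : t * n ≤ j * n := Nat.mul_le_mul_right n (by omega)
        omega
      · rw [Nat.add_mul_mod_self_right]
        exact Nat.mod_eq_of_lt hi
    have hinj : Set.InjOn (fun t => i + t * n) (Finset.range (j+1)) := by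
      intro a _ b _ hab
      simp only at hab
      have h' : a * n = b * n := by omega
      have := Nat.eq_of_mul_eq_mul_right hn h'
      omega
    have := Finset.card_le_card hsub
    rwa [Finset.card_image_of_injOn hinj, Finset.card_range] at this

lemma filter_range_lt_card (n c : ℕ) :
    ((Finset.range n).filter (fun i => i < c)).card = min n c := by
  have : (Finset.range n).filter (fun i => i < c) = Finset.range (min n c) := by
    ext x
    simp only [Finset.mem_filter, Finset.mem_range, lt_min_iff]
  rw [this, Finset.card_range]

variable {M : Type} [Fintype M] [DecidableEq M]

/-- The balanced-partition construction for a single route. -/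
lemma exists_partition (A kq : ℕ) (hA : 1 ≤ A) (hkq : 1 ≤ kq) (γ : ℕ → ℝ) (δ : ℝ)
    (Mr : Finset M) (hS : Mr.card ≤ A * kq) :
    ∃ P : Finset (Finset M),
      (∀ b ∈ P, b.Nonempty ∧ b.card ≤ A ∧ b ⊆ Mr) ∧
      (∀ m : M, m ∈ Mr → ((P.filter (fun b => m ∈ b)).card = 1)) ∧
      (∀ m : M, m ∉ Mr → ((P.filter (fun b => m ∈ b)).card = 0)) ∧
      (P.card ≤ kq) ∧
      (∑ b ∈ P, fc γ δ b.card =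
        ∑ j ∈ Finset.range A, Dfc γ δ j * ((min kq (Mr.card - j * kq) : ℕ) : ℝ)) := by
  set S := Mr.card with hSdef
  rcases Nat.eq_zero_or_pos S with hS0 | hSpos
  · -- empty route
    refine ⟨∅, by simp, ?_, by simp, by simp, ?_⟩
    · intro m hm
      rw [Finset.card_eq_zero] at hS0
      rw [hS0] at hm
      simp at hm
    · simp only [Finset.sum_empty]
      symm
      apply Finset.sum_eq_zero
      intro j _
      have h0 : S - j * kq = 0 := by omega
      rw [h0]
      simp
  · set n := min kq S with hndef
    have hn1 : 1 ≤ n := by omega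
    have hnS : n ≤ S := by omega
    set e := Mr.equivFin with hedef
    -- the group with index i
    set G : ℕ → Finset M := fun i =>
      (Mr.attach.filter (fun m => ((e m : Fin S) : ℕ) % n = i)).image Subtype.val with hGdef
    have hmemG : ∀ i (m : M), m ∈ G i ↔ ∃ hm : m ∈ Mr, ((e ⟨m, hm⟩ : Fin S) : ℕ) % n = i := by
      intro i m
      simp only [hGdef, Finset.mem_image, Finset.mem_filter, Finset.mem_attach, true_and]
      constructor
      · rintro ⟨⟨m', hm'⟩, hcond, rfl⟩
        exact ⟨hm', hcond⟩
      · rintro ⟨hm, hcond⟩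
        exact ⟨⟨m, hm⟩, hcond, rfl⟩
    have hGsub : ∀ i, G i ⊆ Mr := by
      intro i m hm
      rw [hmemG] at hm
      exact hm.1
    have hGcard : ∀ i, (G i).card = ((Finset.range S).filter (fun x => x % n = i)).card := by
      intro i
      rw [hGdef]
      rw [Finset.card_image_of_injective _ Subtype.val_injective]
      apply Finset.card_bij (fun m _ => ((e m : Fin S) : ℕ))
      · intro a ha
        rw [Finset.mem_filter] at ha
        rw [Finset.mem_filter, Finset.mem_range]
        exact ⟨(e a).isLt, ha.2⟩
      · intro a ha b hb hab
        have : (e a : Fin S) = e b := Fin.ext hab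
        exact e.injective this
      · intro x hx
        rw [Finset.mem_filter, Finset.mem_range] at hx
        refine ⟨e.symm ⟨x, hx.1⟩, ?_, by simp⟩
        rw [Finset.mem_filter]
        refine ⟨Finset.mem_attach _ _, by simp [hx.2]⟩
    -- counting: j+1 ≤ |G i| ↔ i + j*n < S  (for i < n)
    have hGge : ∀ i j, i < n → (j + 1 ≤ (G i).card ↔ i + j * n < S) := by
      intro i j hi
      rw [hGcard]
      exact count_res_ge_iff S n i j (by omega) hi
    have hGne : ∀ i, i < n → (G i).Nonempty := by
      intro i hi
      rw [← Finset.card_pos]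
      have := (hGge i 0 hi).2 (by omega)
      omega
    have hGle : ∀ i, i < n → (G i).card ≤ A := by
      intro i hi
      by_contra hc
      push_neg at hc
      have hiAn := (hGge i A hi).1 (by omega)
      rcases le_or_gt kq S with hcase | hcase
      · have hnk : n = kq := by omega
        rw [hnk] at hiAn
        omega
      · have hnk : n = S := by omega
        rw [hnk] at hiAn
        have hAS : S ≤ A * S := Nat.le_mul_of_pos_left S hA
        omega
    have hGdisj : ∀ i i', i ≠ i' → ∀ m, m ∈ G i → m ∈ G i' → False := by
      intro i i' hne m hmi hmi'
      rw [hmemG] at hmi hmi'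
      obtain ⟨hm, h1⟩ := hmi
      obtain ⟨hm', h2⟩ := hmi'
      rw [show (⟨m, hm'⟩ : {x // x ∈ Mr}) = ⟨m, hm⟩ from rfl] at h2
      exact hne (h1 ▸ h2 ▸ rfl)
    have hGinj : Set.InjOn G (Finset.range n) := by
      intro i hi i' hi' hGeq
      by_contra hne
      obtain ⟨m, hm⟩ := hGne i (by simpa using hi)
      exact hGdisj i i' hne m hm (hGeq ▸ hm)
    refine ⟨(Finset.range n).image G, ?_, ?_, ?_, ?_, ?_⟩
    · intro b hb
      rw [Finset.mem_image] at hb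
      obtain ⟨i, hi, rfl⟩ := hb
      rw [Finset.mem_range] at hi
      exact ⟨hGne i hi, hGle i hi, hGsub i⟩
    · intro m hm
      -- m belongs to exactly one part
      set i0 := ((e ⟨m, hm⟩ : Fin S) : ℕ) % n with hi0
      have hi0n : i0 < n := Nat.mod_lt _ (by omega)
      have hmG : m ∈ G i0 := (hmemG i0 m).2 ⟨hm, rfl⟩
      rw [Finset.card_eq_one]
      refine ⟨G i0, ?_⟩
      ext b
      simp only [Finset.mem_filter, Finset.mem_image, Finset.mem_singleton]
      constructor
      · rintro ⟨⟨i, hi, rfl⟩, hmb⟩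
        rw [Finset.mem_range] at hi
        rw [hmemG] at hmb
        obtain ⟨hm', hcond⟩ := hmb
        rw [show (⟨m, hm'⟩ : {x // x ∈ Mr}) = ⟨m, hm⟩ from rfl] at hcond
        rw [← hcond]
      · rintro rfl
        exact ⟨⟨i0, by rwa [Finset.mem_range], rfl⟩, hmG⟩
    · intro m hm
      rw [Finset.card_eq_zero, Finset.filter_eq_empty_iff]
      rintro b hb
      rw [Finset.mem_image] at hb
      obtain ⟨i, _, rfl⟩ := hb
      intro hmb
      exact hm (hGsub i hmb)
    · calc ((Finset.range n).image G).card ≤ (Finset.range n).card := Finset.card_image_le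
        _ = n := Finset.card_range n
        _ ≤ kq := by omega
    · rw [Finset.sum_image (fun i hi i' hi' h => hGinj (by simpa using hi) (by simpa using hi') h)]
      -- ∑_{i<n} fc |G i| = ∑_{j<A} Dfc j * min kq (S - j kq)
      have step1 : ∀ i ∈ Finset.range n, fc γ δ (G i).card
          = ∑ j ∈ Finset.range A, (if j + 1 ≤ (G i).card then Dfc γ δ j else 0) := by
        intro i hi
        rw [Finset.mem_range] at hi
        rw [fc_eq_sum]
        rw [← Finset.sum_filter]
        congr 1
        ext j
        simp only [Finset.mem_filter, Finset.mem_range]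
        have := hGle i hi
        omega
      rw [Finset.sum_congr rfl step1, Finset.sum_comm]
      apply Finset.sum_congr rfl
      intro j hj
      rw [← Finset.sum_filter]
      rw [Finset.sum_const, nsmul_eq_mul, mul_comm]
      congr 1
      -- #{i < n : j+1 ≤ |G i|} = min kq (S - j * kq)
      have hset : (Finset.range n).filter (fun i => j + 1 ≤ (G i).card)
          = (Finset.range n).filter (fun i => i < S - j * n) := by
        apply Finset.filter_congr
        intro i hi
        rw [Finset.mem_range] at hi
        rw [hGge i j hi]
        omega
      rw [hset, filter_range_lt_card]
      -- min n (S - j*n) = min kq (S - j*kq)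
      congr 1
      rcases le_or_gt kq S with hcase | hcase
      · have : n = kq := by omega
        rw [this]
      · have hnn : n = S := by omega
        rcases Nat.eq_zero_or_pos j with rfl | hj1
        · omega
        · have h1 : S - j * n = 0 := by
            rw [hnn]
            have : S ≤ j * S := Nat.le_mul_of_pos_left S hj1
            omega
          have h2 : S - j * kq = 0 := by
            have : kq ≤ j * kq := Nat.le_mul_of_pos_left kq hj1
            omega
          omega


section flow
variable (A : ℕ) (α β : M → ℝ) (γ : ℕ → ℝ) (δ : ℝ) (t : R → ℝ) (k : R → ℕ)

/-- coefficients of the flow objective -/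
def cvec : (M × R) ⊕ (R × Fin A) → ℝ
  | .inl (m, r) => α m - β m * t r
  | .inr (r, j) => -(t r * Dfc γ δ (j : ℕ))

/-- the flow polytope -/
def FlowP : Set ((M × R) ⊕ (R × Fin A) → ℝ) :=
  {v | (∀ i, 0 ≤ v i) ∧ (∀ r j, v (.inr (r, j)) ≤ (k r : ℝ)) ∧
    (∀ m, (∑ r, v (.inl (m, r))) ≤ 1) ∧
    (∀ r, (∑ m, v (.inl (m, r))) = ∑ j, v (.inr (r, j)))}

/-- the flow objective -/
def FlowObj (v : (M × R) ⊕ (R × Fin A) → ℝ) : ℝ := ∑ i, cvec A α β γ δ t i * v i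

/-- the natural map from LP solutions to flow vectors -/
def psi (x : Finset M → R → ℝ) : (M × R) ⊕ (R × Fin A) → ℝ
  | .inl (m, r) => ∑ b ∈ (Groups M A).filter (fun b => m ∈ b), x b r
  | .inr (r, j) => ∑ b ∈ (Groups M A).filter (fun b => (j : ℕ) + 1 ≤ b.card), x b r

lemma Vhom_eq (r : R) (b : Finset M) :
    Vhom α β γ δ t r b = (∑ m ∈ b, (α m - β m * t r)) - t r * fc γ δ b.card := by
  simp only [Vhom, fc, Finset.sum_sub_distrib, ← Finset.sum_mul]
  ring

lemma mem_groups_iff (b : Finset M) : b ∈ Groups M A ↔ b.Nonempty ∧ b.card ≤ A := by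
  simp [Groups]

lemma fin_count_card (A c : ℕ) (hc : c ≤ A) :
    ((Finset.univ : Finset (Fin A)).filter (fun j : Fin A => (j : ℕ) + 1 ≤ c)).card = c := by
  have h : ((Finset.univ : Finset (Fin A)).filter (fun j : Fin A => (j : ℕ) + 1 ≤ c)).card
      = (Finset.range c).card := by
    refine Finset.card_bij (fun (j : Fin A) _ => (j : ℕ)) ?_ ?_ ?_
    · intro a ha
      rw [Finset.mem_filter] at ha
      rw [Finset.mem_range]
      omega
    · intro a ha b hb hab
      exact Fin.ext hab
    · intro x hx
      rw [Finset.mem_range] at hx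
      refine ⟨⟨x, by omega⟩, ?_, rfl⟩
      rw [Finset.mem_filter]
      refine ⟨Finset.mem_univ _, ?_⟩
      simpa using hx
  rw [h, Finset.card_range]

lemma fin_sum_Dfc (A c : ℕ) (hc : c ≤ A) :
    (∑ j : Fin A, if (j : ℕ) + 1 ≤ c then Dfc γ δ (j : ℕ) else 0) = fc γ δ c := by
  rw [Fin.sum_univ_eq_sum_range (fun jn => if jn + 1 ≤ c then Dfc γ δ jn else 0) A]
  rw [← Finset.sum_filter]
  have : (Finset.range A).filter (fun jn => jn + 1 ≤ c) = Finset.range c := by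
    ext j
    simp only [Finset.mem_filter, Finset.mem_range]
    omega
  rw [this, fc_eq_sum]

lemma inner_indicator (b : Finset M) (c : ℝ) :
    (∑ m : M, if m ∈ b then c else 0) = (b.card : ℝ) * c := by
  rw [Finset.sum_ite_mem, Finset.univ_inter, Finset.sum_const, nsmul_eq_mul]

lemma psi_mem (x : Finset M → R → ℝ) (hx : LPkFeasible A k x) :
    psi A x ∈ FlowP A k := by
  obtain ⟨hx0, hxg, hxm, hxr⟩ := hx
  refine ⟨?_, ?_, ?_, ?_⟩
  · rintro (⟨m, r⟩ | ⟨r, j⟩) <;>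
      exact Finset.sum_nonneg fun b _ => hx0 b _
  · intro r j
    calc ∑ b ∈ (Groups M A).filter (fun b => (j : ℕ) + 1 ≤ b.card), x b r
        ≤ ∑ b ∈ Groups M A, x b r :=
          Finset.sum_le_sum_of_subset_of_nonneg (Finset.filter_subset _ _)
            (fun b _ _ => hx0 b r)
      _ ≤ (k r : ℝ) := hxr r
  · intro m
    exact hxm m
  · intro r
    have lhs : (∑ m, psi A x (.inl (m, r))) = ∑ b ∈ Groups M A, (b.card : ℝ) * x b r := by
      simp only [psi]
      calc ∑ m, ∑ b ∈ (Groups M A).filter (fun b => m ∈ b), x b r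
          = ∑ m, ∑ b ∈ Groups M A, (if m ∈ b then x b r else 0) := by
            apply Finset.sum_congr rfl
            intro m _
            rw [Finset.sum_filter]
        _ = ∑ b ∈ Groups M A, ∑ m, (if m ∈ b then x b r else 0) := Finset.sum_comm
        _ = ∑ b ∈ Groups M A, (b.card : ℝ) * x b r := by
            apply Finset.sum_congr rfl
            intro b _
            exact inner_indicator b (x b r)
    have rhs : (∑ j, psi A x (.inr (r, j))) = ∑ b ∈ Groups M A, (b.card : ℝ) * x b r := by
      simp only [psi]
      calc ∑ j : Fin A, ∑ b ∈ (Groups M A).filter (fun b => (j : ℕ) + 1 ≤ b.card), x b r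
          = ∑ j : Fin A, ∑ b ∈ Groups M A, (if (j : ℕ) + 1 ≤ b.card then x b r else 0) := by
            apply Finset.sum_congr rfl
            intro j _
            rw [Finset.sum_filter]
        _ = ∑ b ∈ Groups M A, ∑ j : Fin A, (if (j : ℕ) + 1 ≤ b.card then x b r else 0) :=
            Finset.sum_comm
        _ = ∑ b ∈ Groups M A, (b.card : ℝ) * x b r := by
            apply Finset.sum_congr rfl
            intro b hb
            rw [← Finset.sum_filter, Finset.sum_const,
              fin_count_card A b.card ((mem_groups_iff A b).1 hb).2, nsmul_eq_mul]
    rw [lhs, rhs]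

lemma psi_obj (x : Finset M → R → ℝ) :
    FlowObj A α β γ δ t (psi A x) = LPkObj A (Vhom α β γ δ t) x := by
  have hY : (∑ p : M × R, cvec A α β γ δ t (.inl p) * psi A x (.inl p))
      = ∑ b ∈ Groups M A, ∑ r, (∑ m ∈ b, (α m - β m * t r)) * x b r := by
    rw [Fintype.sum_prod_type]
    calc (∑ m, ∑ r, cvec A α β γ δ t (.inl (m, r)) * psi A x (.inl (m, r)))
        = ∑ m, ∑ r, ∑ b ∈ Groups M A, (if m ∈ b then (α m - β m * t r) * x b r else 0) := by
          apply Finset.sum_congr rfl; intro m _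
          apply Finset.sum_congr rfl; intro r _
          simp only [cvec, psi]
          rw [Finset.mul_sum, Finset.sum_filter]
      _ = ∑ r, ∑ b ∈ Groups M A, ∑ m, (if m ∈ b then (α m - β m * t r) * x b r else 0) := by
          rw [Finset.sum_comm]
          apply Finset.sum_congr rfl; intro r _
          rw [Finset.sum_comm]
      _ = ∑ r, ∑ b ∈ Groups M A, (∑ m ∈ b, (α m - β m * t r)) * x b r := by
          apply Finset.sum_congr rfl; intro r _
          apply Finset.sum_congr rfl; intro b _
          rw [Finset.sum_ite_mem, Finset.univ_inter, ← Finset.sum_mul]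
      _ = ∑ b ∈ Groups M A, ∑ r, (∑ m ∈ b, (α m - β m * t r)) * x b r := Finset.sum_comm
  have hZ : (∑ q : R × Fin A, cvec A α β γ δ t (.inr q) * psi A x (.inr q))
      = ∑ b ∈ Groups M A, ∑ r, -((t r * fc γ δ b.card) * x b r) := by
    rw [Fintype.sum_prod_type]
    calc (∑ r, ∑ j : Fin A, cvec A α β γ δ t (.inr (r, j)) * psi A x (.inr (r, j)))
        = ∑ r, ∑ j : Fin A, ∑ b ∈ Groups M A,
            (if (j : ℕ) + 1 ≤ b.card then (-(t r) * x b r) * Dfc γ δ (j : ℕ) else 0) := by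
          apply Finset.sum_congr rfl; intro r _
          apply Finset.sum_congr rfl; intro j _
          simp only [cvec, psi]
          rw [Finset.mul_sum, Finset.sum_filter]
          apply Finset.sum_congr rfl; intro b _
          split <;> ring
      _ = ∑ r, ∑ b ∈ Groups M A, ∑ j : Fin A,
            (if (j : ℕ) + 1 ≤ b.card then (-(t r) * x b r) * Dfc γ δ (j : ℕ) else 0) := by
          apply Finset.sum_congr rfl; intro r _
          rw [Finset.sum_comm]
      _ = ∑ r, ∑ b ∈ Groups M A, (-(t r) * x b r) *
            (∑ j : Fin A, if (j : ℕ) + 1 ≤ b.card then Dfc γ δ (j : ℕ) else 0) := by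
          apply Finset.sum_congr rfl; intro r _
          apply Finset.sum_congr rfl; intro b _
          rw [Finset.mul_sum]
          apply Finset.sum_congr rfl; intro j _
          split <;> ring
      _ = ∑ r, ∑ b ∈ Groups M A, -((t r * fc γ δ b.card) * x b r) := by
          apply Finset.sum_congr rfl; intro r _
          apply Finset.sum_congr rfl; intro b hb
          rw [fin_sum_Dfc γ δ A b.card ((mem_groups_iff A b).1 hb).2]
          ring
      _ = ∑ b ∈ Groups M A, ∑ r, -((t r * fc γ δ b.card) * x b r) := Finset.sum_comm
  rw [FlowObj, Fintype.sum_sum_type, hY, hZ, LPkObj, ← Finset.sum_add_distrib]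
  apply Finset.sum_congr rfl; intro b _
  rw [← Finset.sum_add_distrib]
  apply Finset.sum_congr rfl; intro r _
  rw [Vhom_eq]
  ring

end flow

section flow2
variable (A : ℕ) (α β : M → ℝ) (γ : ℕ → ℝ) (δ : ℝ) (t : R → ℝ) (k : R → ℕ)

lemma flowP_closed : IsClosed (FlowP A k : Set ((M × R) ⊕ (R × Fin A) → ℝ)) := by
  have h1 : IsClosed {v : (M × R) ⊕ (R × Fin A) → ℝ | ∀ i, 0 ≤ v i} := by
    rw [Set.setOf_forall]
    exact isClosed_iInter fun i => isClosed_le continuous_const (continuous_apply i)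
  have h2 : IsClosed {v : (M × R) ⊕ (R × Fin A) → ℝ | ∀ r j, v (.inr (r, j)) ≤ (k r : ℝ)} := by
    rw [Set.setOf_forall]
    refine isClosed_iInter fun r => ?_
    rw [Set.setOf_forall]
    exact isClosed_iInter fun j => isClosed_le (continuous_apply _) continuous_const
  have h3 : IsClosed {v : (M × R) ⊕ (R × Fin A) → ℝ | ∀ m, (∑ r, v (.inl (m, r))) ≤ 1} := by
    rw [Set.setOf_forall]
    exact isClosed_iInter fun m => isClosed_le
      (continuous_finset_sum _ fun r _ => continuous_apply _) continuous_const
  have h4 : IsClosed {v : (M × R) ⊕ (R × Fin A) → ℝ |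
      ∀ r, (∑ m, v (.inl (m, r))) = ∑ j, v (.inr (r, j))} := by
    rw [Set.setOf_forall]
    exact isClosed_iInter fun r => isClosed_eq
      (continuous_finset_sum _ fun m _ => continuous_apply _)
      (continuous_finset_sum _ fun j _ => continuous_apply _)
  exact h1.inter (h2.inter (h3.inter h4))

lemma flowObj_continuous : Continuous (FlowObj A α β γ δ t) :=
  continuous_finset_sum _ fun i _ => (continuous_const.mul (continuous_apply i))

lemma flowP_compact : IsCompact (FlowP A k : Set ((M × R) ⊕ (R × Fin A) → ℝ)) := by
  have hsub : (FlowP A k : Set ((M × R) ⊕ (R × Fin A) → ℝ)) ⊆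
      Set.pi Set.univ (fun i => Set.Icc 0 (Sum.elim (fun _ => (1 : ℝ)) (fun q => (k q.1 : ℝ)) i)) := by
    intro v hv
    obtain ⟨h0, hk', hm, _⟩ := hv
    intro i _
    rcases i with ⟨m, r⟩ | ⟨r, j⟩
    · refine ⟨h0 _, ?_⟩
      calc v (.inl (m, r)) ≤ ∑ r', v (.inl (m, r')) :=
            Finset.single_le_sum (fun r' _ => h0 (.inl (m, r'))) (Finset.mem_univ r)
        _ ≤ 1 := hm m
    · exact ⟨h0 _, hk' r j⟩
  exact IsCompact.of_isClosed_subset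
    (isCompact_univ_pi fun i => isCompact_Icc) (flowP_closed A k) hsub

lemma flowP_nonempty : (FlowP A k : Set ((M × R) ⊕ (R × Fin A) → ℝ)).Nonempty := by
  refine ⟨fun _ => 0, fun i => le_refl 0, fun r j => by positivity, fun m => by simp, fun r => by simp⟩

lemma flowObj_add_smul (v w : (M × R) ⊕ (R × Fin A) → ℝ) (c : ℝ) :
    FlowObj A α β γ δ t (v + c • w) = FlowObj A α β γ δ t v + c * FlowObj A α β γ δ t w := by
  simp only [FlowObj, Pi.add_apply, Pi.smul_apply, smul_eq_mul, Finset.mul_sum,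
    ← Finset.sum_add_distrib]
  apply Finset.sum_congr rfl
  intro i _
  ring

end flow2

section kernel
variable (A : ℕ) (k : R → ℕ)

lemma sum_isInt {κ : Type*} (s : Finset κ) (g : κ → ℝ) (hg : ∀ x ∈ s, ∃ n : ℤ, g x = n) :
    ∃ n : ℤ, (∑ x ∈ s, g x) = n := by
  classical
  induction s using Finset.induction_on with
  | empty => exact ⟨0, by simp⟩
  | @insert a s ha ih =>
    obtain ⟨n1, hn1⟩ := hg a (Finset.mem_insert_self a s)
    obtain ⟨n2, hn2⟩ := ih (fun x hx => hg x (Finset.mem_insert_of_mem hx))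
    exact ⟨n1 + n2, by rw [Finset.sum_insert ha, hn1, hn2]; push_cast; ring⟩

/-- row coefficients of the constraint matrix -/
def coefRow : (M ⊕ R) → ((M × R) ⊕ (R × Fin A)) → ℝ
  | .inl m, .inl (m', _) => if m' = m then 1 else 0
  | .inl _, .inr _ => 0
  | .inr r, .inl (_, r') => if r' = r then 1 else 0
  | .inr r, .inr (r', _) => if r' = r then (-1 : ℝ) else 0

lemma exists_direction (u : (M × R) ⊕ (R × Fin A) → ℝ) (hu : u ∈ FlowP A k)
    (h : ¬ ∀ i, ∃ n : ℤ, u i = (n : ℝ)) :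
    ∃ d : (M × R) ⊕ (R × Fin A) → ℝ, d ≠ 0 ∧
      (∀ i, (∃ n : ℤ, u i = (n : ℝ)) → d i = 0) ∧
      (∀ m, (∑ r, u (.inl (m, r))) = 1 → (∑ r : R, d (Sum.inl (m, r))) = 0) ∧
      (∀ r, (∑ m : M, d (Sum.inl (m, r))) = ∑ j : Fin A, d (Sum.inr (r, j))) := by
  classical
  obtain ⟨hu0, huk, hum, hur⟩ := hu
  set Frac : Finset ((M × R) ⊕ (R × Fin A)) :=
    Finset.univ.filter (fun i => ¬ ∃ n : ℤ, u i = (n : ℝ)) with hFrac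
  have hFne : Frac.Nonempty := by
    push_neg at h
    obtain ⟨i, hi⟩ := h
    exact ⟨i, by simp [hFrac, hi]⟩
  have hmemF : ∀ i, i ∈ Frac ↔ ¬ ∃ n : ℤ, u i = (n : ℝ) := by
    intro i; simp [hFrac]
  set tightR : Finset M := Finset.univ.filter
    (fun m => (∑ r, u (.inl (m, r))) = 1 ∧ ∃ r, (Sum.inl (m, r) : (M × R) ⊕ (R × Fin A)) ∈ Frac)
    with htightR
  set routesE : Finset R := Finset.univ.filter
    (fun r => (∃ m, (Sum.inl (m, r) : (M × R) ⊕ (R × Fin A)) ∈ Frac) ∨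
      (∃ j, (Sum.inr (r, j) : (M × R) ⊕ (R × Fin A)) ∈ Frac)) with hroutesE
  set fracY : Finset (M × R) := Finset.univ.filter
    (fun p => (Sum.inl p : (M × R) ⊕ (R × Fin A)) ∈ Frac) with hfracY
  set fracZ : Finset (R × Fin A) := Finset.univ.filter
    (fun q => (Sum.inr q : (M × R) ⊕ (R × Fin A)) ∈ Frac) with hfracZ
  -- every fractional coordinate lies over a route in routesE
  have hY2E : ∀ p ∈ fracY, p.2 ∈ routesE := by
    rintro ⟨m, r⟩ hp
    rw [hfracY, Finset.mem_filter] at hp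
    rw [hroutesE, Finset.mem_filter]
    exact ⟨Finset.mem_univ _, Or.inl ⟨m, hp.2⟩⟩
  have hZ2E : ∀ q ∈ fracZ, q.1 ∈ routesE := by
    rintro ⟨r, j⟩ hq
    rw [hfracZ, Finset.mem_filter] at hq
    rw [hroutesE, Finset.mem_filter]
    exact ⟨Finset.mem_univ _, Or.inr ⟨j, hq.2⟩⟩
  -- cardinality bookkeeping
  have hcardF : fracY.card + fracZ.card = Frac.card := by
    have himg : Frac = (fracY.image Sum.inl) ∪ (fracZ.image Sum.inr) := by
      ext i
      rcases i with p | q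
      · simp [hfracY, hfracZ]
      · simp [hfracY, hfracZ]
    rw [himg, Finset.card_union_of_disjoint, Finset.card_image_of_injective _ Sum.inl_injective,
      Finset.card_image_of_injective _ Sum.inr_injective]
    · rw [Finset.disjoint_left]
      rintro i hi hi'
      rw [Finset.mem_image] at hi hi'
      obtain ⟨p, _, rfl⟩ := hi
      obtain ⟨q, _, hq⟩ := hi'
      exact absurd hq (by simp)
  -- each tight rider has at least two fractional coordinates
  have claim1 : ∀ m ∈ tightR, ∃ r1 r2 : R, r1 ≠ r2 ∧
      (Sum.inl (m, r1) : (M × R) ⊕ (R × Fin A)) ∈ Frac ∧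
      (Sum.inl (m, r2) : (M × R) ⊕ (R × Fin A)) ∈ Frac := by
    intro m hm
    rw [htightR, Finset.mem_filter] at hm
    obtain ⟨_, hsum1, r0, hr0⟩ := hm
    by_contra hno
    push_neg at hno
    have hothers : ∀ r ∈ Finset.univ.erase r0, ∃ n : ℤ, u (.inl (m, r)) = (n : ℝ) := by
      intro r hr
      rw [Finset.mem_erase] at hr
      by_contra hint
      have hrF : (Sum.inl (m, r) : (M × R) ⊕ (R × Fin A)) ∈ Frac := by
        rw [hmemF]; exact hint
      exact (hno r r0 hr.1 hrF) hr0
    obtain ⟨N, hN⟩ := sum_isInt _ _ hothers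
    have hsplit : u (.inl (m, r0)) + ∑ r ∈ Finset.univ.erase r0, u (.inl (m, r))
        = ∑ r, u (.inl (m, r)) :=
      Finset.add_sum_erase Finset.univ (fun r => u (.inl (m, r))) (Finset.mem_univ r0)
    have : u (.inl (m, r0)) = ((1 - N : ℤ) : ℝ) := by
      push_cast
      rw [hN] at hsplit
      rw [hsum1] at hsplit
      linarith
    rw [hmemF] at hr0
    exact hr0 ⟨1 - N, this⟩
  -- each route in routesE has at least two incident fractional coordinates
  have claim2 : ∀ r ∈ routesE,
      2 ≤ (fracY.filter (fun p => p.2 = r)).card + (fracZ.filter (fun q => q.1 = r)).card := by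
    intro r hr
    by_contra hlt
    push_neg at hlt
    set DY := fracY.filter (fun p => p.2 = r) with hDY
    set DZ := fracZ.filter (fun q => q.1 = r) with hDZ
    have hmemDY : ∀ m : M, (m, r) ∈ DY ↔ (Sum.inl (m, r) : (M × R) ⊕ (R × Fin A)) ∈ Frac := by
      intro m
      simp [hDY, hfracY]
    have hmemDZ : ∀ j : Fin A, (r, j) ∈ DZ ↔ (Sum.inr (r, j) : (M × R) ⊕ (R × Fin A)) ∈ Frac := by
      intro j
      simp [hDZ, hfracZ]
    have hne : DY.Nonempty ∨ DZ.Nonempty := by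
      rw [hroutesE, Finset.mem_filter] at hr
      rcases hr.2 with ⟨m, hm⟩ | ⟨j, hj⟩
      · exact Or.inl ⟨(m, r), (hmemDY m).2 hm⟩
      · exact Or.inr ⟨(r, j), (hmemDZ j).2 hj⟩
    rcases hne with hne | hne
    · -- DY nonempty, so DY is a singleton and DZ is empty
      obtain ⟨⟨m0, r'⟩, hp0⟩ := hne
      have hr' : r' = r := by
        rw [hDY, Finset.mem_filter] at hp0
        exact hp0.2
      rw [hr'] at hp0
      have hDZ0 : DZ.card = 0 := by
        have := Finset.card_pos.2 (⟨_, hp0⟩ : DY.Nonempty)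
        omega
      have hDY1 : ∀ m, (m, r) ∈ DY → m = m0 := by
        intro m hmmem
        by_contra hne'
        have h2 : ({(m, r), (m0, r)} : Finset (M × R)) ⊆ DY := by
          intro p hp
          rcases Finset.mem_insert.1 hp with rfl | hp
          · exact hmmem
          · rw [Finset.mem_singleton] at hp
            subst hp; exact hp0
        have h3 : ({(m, r), (m0, r)} : Finset (M × R)).card = 2 := by
          rw [Finset.card_insert_of_notMem (by simp [hne']), Finset.card_singleton]
        have := Finset.card_le_card h2
        omega
      have hz : ∀ j : Fin A, ∃ n : ℤ, u (.inr (r, j)) = (n : ℝ) := by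
        intro j
        by_contra hint
        have : (r, j) ∈ DZ := (hmemDZ j).2 ((hmemF _).2 hint)
        rw [Finset.card_eq_zero] at hDZ0
        rw [hDZ0] at this
        simp at this
      have hy : ∀ m ∈ Finset.univ.erase m0, ∃ n : ℤ, u (.inl (m, r)) = (n : ℝ) := by
        intro m hm
        rw [Finset.mem_erase] at hm
        by_contra hint
        exact hm.1 (hDY1 m ((hmemDY m).2 ((hmemF _).2 hint)))
      obtain ⟨N1, hN1⟩ := sum_isInt _ _ hy
      obtain ⟨N2, hN2⟩ := sum_isInt Finset.univ (fun j => u (.inr (r, j))) (fun j _ => hz j)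
      have hsplit : u (.inl (m0, r)) + ∑ m ∈ Finset.univ.erase m0, u (.inl (m, r))
          = ∑ m, u (.inl (m, r)) :=
        Finset.add_sum_erase Finset.univ (fun m => u (.inl (m, r))) (Finset.mem_univ m0)
      have hint0 : u (.inl (m0, r)) = ((N2 - N1 : ℤ) : ℝ) := by
        push_cast
        rw [hN1] at hsplit
        rw [hur r, hN2] at hsplit
        linarith
      have : (Sum.inl (m0, r) : (M × R) ⊕ (R × Fin A)) ∈ Frac := (hmemDY m0).1 hp0
      rw [hmemF] at this
      exact this ⟨N2 - N1, hint0⟩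
    · -- DZ nonempty, so DZ is a singleton and DY is empty
      obtain ⟨⟨r', j0⟩, hq0⟩ := hne
      have hr' : r' = r := by
        rw [hDZ, Finset.mem_filter] at hq0
        exact hq0.2
      rw [hr'] at hq0
      have hDY0 : DY.card = 0 := by
        have := Finset.card_pos.2 (⟨_, hq0⟩ : DZ.Nonempty)
        omega
      have hDZ1 : ∀ j, (r, j) ∈ DZ → j = j0 := by
        intro j hjmem
        by_contra hne'
        have h2 : ({(r, j), (r, j0)} : Finset (R × Fin A)) ⊆ DZ := by
          intro q hq
          rcases Finset.mem_insert.1 hq with rfl | hq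
          · exact hjmem
          · rw [Finset.mem_singleton] at hq
            subst hq; exact hq0
        have h3 : ({(r, j), (r, j0)} : Finset (R × Fin A)).card = 2 := by
          rw [Finset.card_insert_of_notMem (by simp [hne']), Finset.card_singleton]
        have := Finset.card_le_card h2
        omega
      have hy : ∀ m : M, ∃ n : ℤ, u (.inl (m, r)) = (n : ℝ) := by
        intro m
        by_contra hint
        have : (m, r) ∈ DY := (hmemDY m).2 ((hmemF _).2 hint)
        rw [Finset.card_eq_zero] at hDY0
        rw [hDY0] at this
        simp at this
      have hz : ∀ j ∈ Finset.univ.erase j0, ∃ n : ℤ, u (.inr (r, j)) = (n : ℝ) := by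
        intro j hj
        rw [Finset.mem_erase] at hj
        by_contra hint
        exact hj.1 (hDZ1 j ((hmemDZ j).2 ((hmemF _).2 hint)))
      obtain ⟨N1, hN1⟩ := sum_isInt _ _ hz
      obtain ⟨N2, hN2⟩ := sum_isInt Finset.univ (fun m => u (.inl (m, r))) (fun m _ => hy m)
      have hsplit : u (.inr (r, j0)) + ∑ j ∈ Finset.univ.erase j0, u (.inr (r, j))
          = ∑ j, u (.inr (r, j)) :=
        Finset.add_sum_erase Finset.univ (fun j => u (.inr (r, j))) (Finset.mem_univ j0)
      have hint0 : u (.inr (r, j0)) = ((N2 - N1 : ℤ) : ℝ) := by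
        push_cast
        rw [hN1] at hsplit
        rw [← hur r, hN2] at hsplit
        linarith
      have : (Sum.inr (r, j0) : (M × R) ⊕ (R × Fin A)) ∈ Frac := (hmemDZ j0).1 hq0
      rw [hmemF] at this
      exact this ⟨N2 - N1, hint0⟩
  -- counting: |tightR| + |routesE| ≤ |Frac|, and in case of equality strong structure
  have count1 : 2 * tightR.card ≤ (fracY.filter (fun p => p.1 ∈ tightR)).card := by
    have hfib : (fracY.filter (fun p => p.1 ∈ tightR)).card
        = ∑ m ∈ tightR, ((fracY.filter (fun p => p.1 ∈ tightR)).filter (fun p => p.1 = m)).card :=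
      Finset.card_eq_sum_card_fiberwise (fun p hp => (Finset.mem_filter.1 hp).2)
    rw [hfib]
    have : ∀ m ∈ tightR, 2 ≤ ((fracY.filter (fun p => p.1 ∈ tightR)).filter (fun p => p.1 = m)).card := by
      intro m hm
      obtain ⟨r1, r2, hne', hf1, hf2⟩ := claim1 m hm
      have hsub : ({(m, r1), (m, r2)} : Finset (M × R)) ⊆
          (fracY.filter (fun p => p.1 ∈ tightR)).filter (fun p => p.1 = m) := by
        intro p hp
        have hmem : ∀ rr, (Sum.inl (m, rr) : (M × R) ⊕ (R × Fin A)) ∈ Frac →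
            (m, rr) ∈ (fracY.filter (fun p => p.1 ∈ tightR)).filter (fun p => p.1 = m) := by
          intro rr hrr
          rw [Finset.mem_filter, Finset.mem_filter]
          exact ⟨⟨by simp [hfracY, hrr], hm⟩, rfl⟩
        rcases Finset.mem_insert.1 hp with rfl | hp
        · exact hmem r1 hf1
        · rw [Finset.mem_singleton] at hp
          subst hp
          exact hmem r2 hf2
      have hc2 : ({(m, r1), (m, r2)} : Finset (M × R)).card = 2 := by
        rw [Finset.card_insert_of_notMem (by simp [hne']), Finset.card_singleton]
      have := Finset.card_le_card hsub
      omega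
    calc 2 * tightR.card = ∑ _m ∈ tightR, 2 := by rw [Finset.sum_const]; ring
      _ ≤ _ := Finset.sum_le_sum this
  have count2 : 2 * routesE.card ≤ fracY.card + fracZ.card := by
    have hfibY : fracY.card = ∑ r ∈ routesE, (fracY.filter (fun p => p.2 = r)).card :=
      Finset.card_eq_sum_card_fiberwise hY2E
    have hfibZ : fracZ.card = ∑ r ∈ routesE, (fracZ.filter (fun q => q.1 = r)).card :=
      Finset.card_eq_sum_card_fiberwise hZ2E
    rw [hfibY, hfibZ, ← Finset.sum_add_distrib]
    calc 2 * routesE.card = ∑ _r ∈ routesE, 2 := by rw [Finset.sum_const]; ring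
      _ ≤ _ := Finset.sum_le_sum claim2
  have hTE : tightR.card + routesE.card ≤ Frac.card := by
    have hsub : (fracY.filter (fun p => p.1 ∈ tightR)).card ≤ fracY.card :=
      Finset.card_le_card (Finset.filter_subset _ _)
    omega
  -- the constraint matrix restricted to relevant rows and fractional columns
  set Cmat : Matrix ({m // m ∈ tightR} ⊕ {r // r ∈ routesE}) {i // i ∈ Frac} ℝ :=
    fun e i => coefRow A (Sum.map Subtype.val Subtype.val e) i.val with hCmat
  have hker : ∃ d' : {i // i ∈ Frac} → ℝ, d' ≠ 0 ∧ Cmat.mulVec d' = 0 := by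
    by_contra hno
    push_neg at hno
    have hkerbot : LinearMap.ker Cmat.mulVecLin = ⊥ := by
      rw [Submodule.eq_bot_iff]
      intro d' hd'
      by_contra hne
      exact hno d' hne (by rw [← Matrix.mulVecLin_apply]; exact hd')
    have hinj : Function.Injective Cmat.mulVecLin := LinearMap.ker_eq_bot.1 hkerbot
    have hle := LinearMap.finrank_le_finrank_of_injective hinj
    rw [Module.finrank_pi, Module.finrank_pi] at hle
    rw [Fintype.card_sum, Fintype.card_coe, Fintype.card_coe, Fintype.card_coe] at hle
    -- equality case analysis
    have heq : tightR.card + routesE.card = Frac.card := le_antisymm hTE hle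
    have hfilcard : (fracY.filter (fun p => p.1 ∈ tightR)).card = fracY.card ∧ fracZ.card = 0 := by
      have hsub : (fracY.filter (fun p => p.1 ∈ tightR)).card ≤ fracY.card :=
        Finset.card_le_card (Finset.filter_subset _ _)
      omega
    have hZempty : fracZ = ∅ := Finset.card_eq_zero.1 hfilcard.2
    have hfil : fracY.filter (fun p => p.1 ∈ tightR) = fracY :=
      Finset.eq_of_subset_of_card_le (Finset.filter_subset _ _) (le_of_eq hfilcard.1.symm)
    have hytight : ∀ p ∈ fracY, p.1 ∈ tightR := by
      intro p hp
      rw [← hfil] at hp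
      exact (Finset.mem_filter.1 hp).2
    -- the left-kernel vector
    set w : ({m // m ∈ tightR} ⊕ {r // r ∈ routesE}) → ℝ :=
      Sum.elim (fun _ => (1 : ℝ)) (fun _ => (-1 : ℝ)) with hw
    have hvm : Matrix.vecMul w Cmat = 0 := by
      funext i
      obtain ⟨iv, hiv⟩ := i
      rcases iv with ⟨m, r⟩ | q
      · -- fractional y-coordinate
        have hmY : (m, r) ∈ fracY := by
          rw [hfracY, Finset.mem_filter]
          exact ⟨Finset.mem_univ _, hiv⟩
        have hmT : m ∈ tightR := hytight _ hmY
        have hrE : r ∈ routesE := hY2E _ hmY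
        show (∑ e, w e * Cmat e ⟨Sum.inl (m, r), hiv⟩) = 0
        rw [Fintype.sum_sum_type]
        have e1 : (∑ a : {m // m ∈ tightR}, w (Sum.inl a) * Cmat (Sum.inl a) ⟨Sum.inl (m, r), hiv⟩)
            = ∑ a ∈ tightR, (if m = a then (1 : ℝ) else 0) := by
          rw [← Finset.sum_coe_sort tightR (fun a => if m = a then (1:ℝ) else 0)]
          apply Finset.sum_congr rfl
          intro a _
          simp only [hw, hCmat, Sum.elim_inl, one_mul, Sum.map_inl, coefRow]
        have e2 : (∑ b : {r // r ∈ routesE}, w (Sum.inr b) * Cmat (Sum.inr b) ⟨Sum.inl (m, r), hiv⟩)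
            = ∑ b ∈ routesE, (if r = b then (-1 : ℝ) else 0) := by
          rw [← Finset.sum_coe_sort routesE (fun b => if r = b then (-1:ℝ) else 0)]
          apply Finset.sum_congr rfl
          intro b _
          simp only [hw, hCmat, Sum.elim_inr, Sum.map_inr, coefRow]
          split <;> ring
        rw [e1, e2, Finset.sum_ite_eq, Finset.sum_ite_eq, if_pos hmT, if_pos hrE]
        simp
      · -- fractional z-coordinate: impossible
        exfalso
        have : q ∈ fracZ := by
          rw [hfracZ, Finset.mem_filter]
          exact ⟨Finset.mem_univ _, hiv⟩
        rw [hZempty] at this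
        simp at this
    have hw0 : w ≠ 0 := by
      obtain ⟨i0, hi0⟩ := hFne
      rcases i0 with ⟨m0, r0⟩ | q0
      · have hmY : (m0, r0) ∈ fracY := by
          rw [hfracY, Finset.mem_filter]
          exact ⟨Finset.mem_univ _, hi0⟩
        have hrE : r0 ∈ routesE := hY2E _ hmY
        intro hweq
        have := congrFun hweq (Sum.inr ⟨r0, hrE⟩)
        simp [hw] at this
      · exfalso
        have : q0 ∈ fracZ := by
          rw [hfracZ, Finset.mem_filter]
          exact ⟨Finset.mem_univ _, hi0⟩
        rw [hZempty] at this
        simp at this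
    -- rank contradiction
    have hwker : w ∈ LinearMap.ker ((Matrix.transpose Cmat).mulVecLin) := by
      rw [LinearMap.mem_ker, Matrix.mulVecLin_apply, Matrix.mulVec_transpose]
      exact hvm
    have hkerT : LinearMap.ker ((Matrix.transpose Cmat).mulVecLin) ≠ ⊥ := by
      rw [Submodule.ne_bot_iff]
      exact ⟨w, hwker, hw0⟩
    have hposT : 0 < Module.finrank ℝ (LinearMap.ker ((Matrix.transpose Cmat).mulVecLin)) := by
      rcases Nat.eq_zero_or_pos (Module.finrank ℝ (LinearMap.ker ((Matrix.transpose Cmat).mulVecLin))) with h0 | h0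
      · exact absurd (Submodule.finrank_eq_zero.1 h0) hkerT
      · exact h0
    have hrnT := LinearMap.finrank_range_add_finrank_ker ((Matrix.transpose Cmat).mulVecLin)
    have hrnC := LinearMap.finrank_range_add_finrank_ker (Cmat.mulVecLin)
    rw [hkerbot] at hrnC
    rw [Module.finrank_pi] at hrnT hrnC
    rw [Fintype.card_sum, Fintype.card_coe, Fintype.card_coe] at hrnT
    rw [Fintype.card_coe] at hrnC
    have htr : Matrix.rank (Matrix.transpose Cmat) = Matrix.rank Cmat := Matrix.rank_transpose Cmat
    have hrT : Matrix.rank (Matrix.transpose Cmat) = Module.finrank ℝ (LinearMap.range ((Matrix.transpose Cmat).mulVecLin)) := rfl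
    have hrC : Matrix.rank Cmat = Module.finrank ℝ (LinearMap.range (Cmat.mulVecLin)) := rfl
    rw [finrank_bot] at hrnC
    omega
  obtain ⟨d', hd'0, hd'ker⟩ := hker
  -- extend to a direction on all coordinates
  set d : (M × R) ⊕ (R × Fin A) → ℝ :=
    fun i => if h : i ∈ Frac then d' ⟨i, h⟩ else 0 with hd
  have hd_off : ∀ i, i ∉ Frac → d i = 0 := by
    intro i hi
    simp [hd, hi]
  have hd_on : ∀ (i) (h : i ∈ Frac), d i = d' ⟨i, h⟩ := by
    intro i h
    simp [hd, h]
  -- the defining row identities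
  have hrowEq : ∀ e : {m // m ∈ tightR} ⊕ {r // r ∈ routesE},
      (∑ i, coefRow A (Sum.map Subtype.val Subtype.val e) i * d i) = 0 := by
    intro e
    have h1 : (∑ i, coefRow A (Sum.map Subtype.val Subtype.val e) i * d i)
        = ∑ i ∈ Frac, coefRow A (Sum.map Subtype.val Subtype.val e) i * d i := by
      symm
      apply Finset.sum_subset (Finset.subset_univ Frac)
      intro i _ hi
      rw [hd_off i hi, mul_zero]
    have h2 : (∑ i ∈ Frac, coefRow A (Sum.map Subtype.val Subtype.val e) i * d i)
        = ∑ i : {i // i ∈ Frac}, Cmat e i * d' i := by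
      rw [← Finset.sum_coe_sort Frac]
      apply Finset.sum_congr rfl
      intro i _
      rw [hCmat, hd_on i.val i.prop]
    rw [h1, h2]
    have := congrFun hd'ker e
    rw [Matrix.mulVec, dotProduct] at this
    exact this
  -- decomposition of the row sums
  have decompT : ∀ m : M, (∑ i, coefRow A (Sum.inl m : M ⊕ R) i * d i) = ∑ r : R, d (Sum.inl (m, r)) := by
    intro m
    rw [Fintype.sum_sum_type]
    have hz : (∑ q : R × Fin A, coefRow A (Sum.inl m : M ⊕ R) (Sum.inr q) * d (Sum.inr q)) = 0 := by
      apply Finset.sum_eq_zero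
      intro q _
      simp [coefRow]
    rw [hz, add_zero, Fintype.sum_prod_type]
    have hy : ∀ m' : M, (∑ r, coefRow A (Sum.inl m : M ⊕ R) (Sum.inl (m', r)) * d (Sum.inl (m', r)))
        = if m' = m then (∑ r : R, d (Sum.inl (m', r))) else 0 := by
      intro m'
      split
      · apply Finset.sum_congr rfl
        intro r _
        simp [coefRow, *]
      · apply Finset.sum_eq_zero
        intro r _
        simp [coefRow, *]
    rw [Finset.sum_congr rfl (fun m' _ => hy m')]
    rw [Finset.sum_ite_eq' Finset.univ m (fun m' => ∑ r : R, d (Sum.inl (m', r)))]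
    simp
  have decompE : ∀ r : R, (∑ i, coefRow A (Sum.inr r : M ⊕ R) i * d i)
      = (∑ m : M, d (Sum.inl (m, r))) - ∑ j : Fin A, d (Sum.inr (r, j)) := by
    intro r
    rw [Fintype.sum_sum_type]
    have hy : (∑ p : M × R, coefRow A (Sum.inr r : M ⊕ R) (Sum.inl p) * d (Sum.inl p))
        = ∑ m : M, d (Sum.inl (m, r)) := by
      rw [Fintype.sum_prod_type]
      have hy1 : ∀ m : M, (∑ r', coefRow A (Sum.inr r : M ⊕ R) (Sum.inl (m, r')) * d (Sum.inl (m, r')))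
          = ∑ r', (if r' = r then d (Sum.inl (m, r')) else 0) := by
        intro m
        apply Finset.sum_congr rfl
        intro r' _
        simp only [coefRow]
        split <;> simp
      rw [Finset.sum_congr rfl (fun m _ => hy1 m)]
      apply Finset.sum_congr rfl
      intro m _
      rw [Finset.sum_ite_eq' Finset.univ r (fun r' => d (Sum.inl (m, r')))]
      simp
    have hzz : (∑ q : R × Fin A, coefRow A (Sum.inr r : M ⊕ R) (Sum.inr q) * d (Sum.inr q))
        = -∑ j : Fin A, d (Sum.inr (r, j)) := by
      rw [Fintype.sum_prod_type]
      have hz1 : ∀ r' : R, (∑ j, coefRow A (Sum.inr r : M ⊕ R) (Sum.inr (r', j)) * d (Sum.inr (r', j)))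
          = ∑ j, (if r' = r then -d (Sum.inr (r', j)) else 0) := by
        intro r'
        apply Finset.sum_congr rfl
        intro j _
        simp only [coefRow]
        split <;> simp
      rw [Finset.sum_congr rfl (fun r' _ => hz1 r')]
      have : ∀ r' : R, (∑ j, (if r' = r then -d (Sum.inr (r', j)) else 0))
          = if r' = r then -∑ j : Fin A, d (Sum.inr (r', j)) else 0 := by
        intro r'
        split <;> simp
      rw [Finset.sum_congr rfl (fun r' _ => this r')]
      rw [Finset.sum_ite_eq' Finset.univ r (fun r' => -∑ j : Fin A, d (Sum.inr (r', j)))]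
      simp
    rw [hy, hzz]
    ring
  -- conclusion
  refine ⟨d, ?_, ?_, ?_, ?_⟩
  · rw [Function.ne_iff] at hd'0 ⊢
    obtain ⟨i0, hi0⟩ := hd'0
    refine ⟨i0.val, ?_⟩
    rw [hd_on i0.val i0.prop]
    simpa using hi0
  · intro i hi
    exact hd_off i (fun hmem => ((hmemF i).1 hmem) hi)
  · intro m hm
    by_cases hfm : ∃ r, (Sum.inl (m, r) : (M × R) ⊕ (R × Fin A)) ∈ Frac
    · have hmT : m ∈ tightR := by
        rw [htightR, Finset.mem_filter]
        exact ⟨Finset.mem_univ _, hm, hfm⟩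
      have := hrowEq (Sum.inl ⟨m, hmT⟩)
      rw [show Sum.map Subtype.val Subtype.val
        (Sum.inl (⟨m, hmT⟩ : {m // m ∈ tightR}) :
          {m // m ∈ tightR} ⊕ {r // r ∈ routesE}) = Sum.inl m from rfl] at this
      rw [decompT m] at this
      exact this
    · push_neg at hfm
      apply Finset.sum_eq_zero
      intro r _
      exact hd_off _ (hfm r)
  · intro r
    by_cases hrE : r ∈ routesE
    · have := hrowEq (Sum.inr ⟨r, hrE⟩)
      rw [show Sum.map Subtype.val Subtype.val
        (Sum.inr (⟨r, hrE⟩ : {r // r ∈ routesE}) :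
          {m // m ∈ tightR} ⊕ {r // r ∈ routesE}) = Sum.inr r from rfl] at this
      rw [decompE r] at this
      linarith [this]
    · have hall : ∀ m, d (Sum.inl (m, r)) = 0 := by
        intro m
        apply hd_off
        intro hmem
        apply hrE
        rw [hroutesE, Finset.mem_filter]
        exact ⟨Finset.mem_univ _, Or.inl ⟨m, hmem⟩⟩
      have hallz : ∀ j, d (Sum.inr (r, j)) = 0 := by
        intro j
        apply hd_off
        intro hmem
        apply hrE
        rw [hroutesE, Finset.mem_filter]
        exact ⟨Finset.mem_univ _, Or.inr ⟨j, hmem⟩⟩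
      rw [Finset.sum_eq_zero (fun m _ => hall m), Finset.sum_eq_zero (fun j _ => hallz j)]

lemma exists_perturb (u : (M × R) ⊕ (R × Fin A) → ℝ) (hu : u ∈ FlowP A k)
    (h : ¬ ∀ i, ∃ n : ℤ, u i = (n : ℝ)) :
    ∃ d : (M × R) ⊕ (R × Fin A) → ℝ, d ≠ 0 ∧ ∃ ε : ℝ, 0 < ε ∧
      u + ε • d ∈ FlowP A k ∧ u - ε • d ∈ FlowP A k := by
  classical
  obtain ⟨d, hd0, hdsupp, hdtight, hdcons⟩ := exists_direction A k u hu h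
  obtain ⟨hu0, huk, hum, hur⟩ := hu
  have hfrac_of : ∀ i, d i ≠ 0 → ¬ ∃ n : ℤ, u i = (n : ℝ) := by
    intro i hdi hint
    exact hdi (hdsupp i hint)
  set εlow : ((M × R) ⊕ (R × Fin A)) → ℝ :=
    fun i => if d i = 0 then 1 else u i / |d i| with hεlow
  set εup : ((M × R) ⊕ (R × Fin A)) → ℝ := fun i =>
    Sum.rec (fun _ => (1 : ℝ))
      (fun q => if d (Sum.inr q) = 0 then 1
        else ((k q.1 : ℝ) - u (Sum.inr q)) / |d (Sum.inr q)|) i with hεup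
  set εm : M → ℝ := fun m => if (∑ r : R, d (Sum.inl (m, r))) = 0 then 1
    else (1 - ∑ r : R, u (Sum.inl (m, r))) / |∑ r : R, d (Sum.inl (m, r))| with hεm
  have hlowpos : ∀ i, 0 < εlow i := by
    intro i
    rw [hεlow]
    dsimp only
    split
    · norm_num
    · rename_i hdi
      have hupos : 0 < u i := by
        rcases lt_or_eq_of_le (hu0 i) with h' | h'
        · exact h'
        · exact absurd ⟨0, by rw [← h']; norm_num⟩ (hfrac_of i hdi)
      exact div_pos hupos (abs_pos.2 hdi)
  have huppos : ∀ i, 0 < εup i := by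
    rintro (⟨m, r⟩ | ⟨r, j⟩)
    · rw [hεup]; norm_num
    · rw [hεup]
      dsimp only
      split
      · norm_num
      · rename_i hdi
        have hlt : u (Sum.inr (r, j)) < (k r : ℝ) := by
          rcases lt_or_eq_of_le (huk r j) with h' | h'
          · exact h'
          · exact absurd ⟨(k r : ℤ), by rw [h']; push_cast; ring⟩ (hfrac_of _ hdi)
        exact div_pos (by linarith) (abs_pos.2 hdi)
  have hmpos : ∀ m, 0 < εm m := by
    intro m
    rw [hεm]
    dsimp only
    split
    · norm_num
    · rename_i hds
      have hnt : (∑ r : R, u (Sum.inl (m, r))) < 1 := by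
        rcases lt_or_eq_of_le (hum m) with h' | h'
        · exact h'
        · exact absurd (hdtight m h') hds
      exact div_pos (by linarith) (abs_pos.2 hds)
  set epsSet : Finset ℝ := insert (1 : ℝ)
    (((Finset.univ : Finset ((M × R) ⊕ (R × Fin A))).image εlow ∪
      (Finset.univ : Finset ((M × R) ⊕ (R × Fin A))).image εup) ∪
      (Finset.univ : Finset M).image εm) with hepsSet
  have hne : epsSet.Nonempty := ⟨1, Finset.mem_insert_self _ _⟩
  set ε : ℝ := epsSet.min' hne with hε
  have hεpos : 0 < ε := by
    have := Finset.min'_mem epsSet hne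
    rw [← hε] at this
    rw [hepsSet] at this
    rcases Finset.mem_insert.1 this with h' | h'
    · rw [h']; norm_num
    · rcases Finset.mem_union.1 h' with h'' | h''
      · rcases Finset.mem_union.1 h'' with h3 | h3
        · obtain ⟨i, _, hi⟩ := Finset.mem_image.1 h3
          rw [← hi]; exact hlowpos i
        · obtain ⟨i, _, hi⟩ := Finset.mem_image.1 h3
          rw [← hi]; exact huppos i
      · obtain ⟨m, _, hm⟩ := Finset.mem_image.1 h''
        rw [← hm]; exact hmpos m
  have hεle_low : ∀ i, ε ≤ εlow i := by
    intro i
    apply Finset.min'_le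
    rw [hepsSet]
    apply Finset.mem_insert_of_mem
    exact Finset.mem_union_left _ (Finset.mem_union_left _
      (Finset.mem_image_of_mem _ (Finset.mem_univ i)))
  have hεle_up : ∀ i, ε ≤ εup i := by
    intro i
    apply Finset.min'_le
    rw [hepsSet]
    apply Finset.mem_insert_of_mem
    exact Finset.mem_union_left _ (Finset.mem_union_right _
      (Finset.mem_image_of_mem _ (Finset.mem_univ i)))
  have hεle_m : ∀ m, ε ≤ εm m := by
    intro m
    apply Finset.min'_le
    rw [hepsSet]
    apply Finset.mem_insert_of_mem
    exact Finset.mem_union_right _ (Finset.mem_image_of_mem _ (Finset.mem_univ m))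
  have kb1 : ∀ i, d i ≠ 0 → ε * |d i| ≤ u i := by
    intro i hdi
    have := hεle_low i
    rw [hεlow] at this
    dsimp only at this
    rw [if_neg hdi] at this
    rwa [le_div_iff₀ (abs_pos.2 hdi)] at this
  have kb2 : ∀ r j, d (Sum.inr (r, j)) ≠ 0 →
      ε * |d (Sum.inr (r, j))| ≤ (k r : ℝ) - u (Sum.inr (r, j)) := by
    intro r j hdi
    have := hεle_up (Sum.inr (r, j))
    rw [hεup] at this
    dsimp only at this
    rw [if_neg hdi] at this
    rwa [le_div_iff₀ (abs_pos.2 hdi)] at this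
  have kb3 : ∀ m, (∑ r : R, d (Sum.inl (m, r))) ≠ 0 →
      ε * |∑ r : R, d (Sum.inl (m, r))| ≤ 1 - ∑ r : R, u (Sum.inl (m, r)) := by
    intro m hds
    have := hεle_m m
    rw [hεm] at this
    dsimp only at this
    rw [if_neg hds] at this
    rwa [le_div_iff₀ (abs_pos.2 hds)] at this
  have memP : ∀ c : ℝ, |c| ≤ ε → u + c • d ∈ FlowP A k := by
    intro c hc
    have hcd : ∀ x : ℝ, |c * x| ≤ ε * |x| := by
      intro x
      rw [abs_mul]
      exact mul_le_mul_of_nonneg_right hc (abs_nonneg _)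
    refine ⟨?_, ?_, ?_, ?_⟩
    · intro i
      show 0 ≤ u i + c * d i
      by_cases hdi : d i = 0
      · simp [hdi, hu0 i]
      · have h1 := kb1 i hdi
        have h2 := neg_abs_le (c * d i)
        have h3 := hcd (d i)
        linarith
    · intro r j
      show u (Sum.inr (r, j)) + c * d (Sum.inr (r, j)) ≤ (k r : ℝ)
      by_cases hdi : d (Sum.inr (r, j)) = 0
      · simp [hdi, huk r j]
      · have h1 := kb2 r j hdi
        have h2 := le_abs_self (c * d (Sum.inr (r, j)))
        have h3 := hcd (d (Sum.inr (r, j)))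
        linarith
    · intro m
      have hexp : (∑ r : R, (u + c • d) (Sum.inl (m, r)))
          = (∑ r : R, u (Sum.inl (m, r))) + c * ∑ r : R, d (Sum.inl (m, r)) := by
        simp [Finset.sum_add_distrib, Finset.mul_sum]
      rw [hexp]
      by_cases hds : (∑ r : R, d (Sum.inl (m, r))) = 0
      · simp [hds, hum m]
      · have h1 := kb3 m hds
        have h2 := le_abs_self (c * ∑ r : R, d (Sum.inl (m, r)))
        have h3 := hcd (∑ r : R, d (Sum.inl (m, r)))
        linarith
    · intro r
      have hexp1 : (∑ m : M, (u + c • d) (Sum.inl (m, r)))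
          = (∑ m : M, u (Sum.inl (m, r))) + c * ∑ m : M, d (Sum.inl (m, r)) := by
        simp [Finset.sum_add_distrib, Finset.mul_sum]
      have hexp2 : (∑ j : Fin A, (u + c • d) (Sum.inr (r, j)))
          = (∑ j : Fin A, u (Sum.inr (r, j))) + c * ∑ j : Fin A, d (Sum.inr (r, j)) := by
        simp [Finset.sum_add_distrib, Finset.mul_sum]
      rw [hexp1, hexp2, hur r, hdcons r]
  refine ⟨d, hd0, ε, hεpos, memP ε (by rw [abs_of_pos hεpos]), ?_⟩
  have : u - ε • d = u + (-ε) • d := by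
    ext i
    simp
    ring
  rw [this]
  exact memP (-ε) (by rw [abs_neg, abs_of_pos hεpos])


lemma exists_integral_opt (α β : M → ℝ) (γ : ℕ → ℝ) (δ : ℝ) (t : R → ℝ) :
    ∃ v ∈ FlowP A k, (∀ u ∈ FlowP A k, FlowObj A α β γ δ t u ≤ FlowObj A α β γ δ t v) ∧
      ∀ i, ∃ n : ℤ, v i = (n : ℝ) := by
  obtain ⟨vmax, hvmem, hvmax⟩ := (flowP_compact A k).exists_isMaxOn (flowP_nonempty A k)
      ((flowObj_continuous A α β γ δ t).continuousOn)
  rw [isMaxOn_iff] at hvmax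
  set Q : Set ((M × R) ⊕ (R × Fin A) → ℝ) :=
    FlowP A k ∩ {v | FlowObj A α β γ δ t v = FlowObj A α β γ δ t vmax} with hQ
  have hQcomp : IsCompact Q := (flowP_compact A k).inter_right
      (isClosed_eq (flowObj_continuous A α β γ δ t) continuous_const)
  have hQne : Q.Nonempty := ⟨vmax, hvmem, rfl⟩
  obtain ⟨v, hv⟩ := hQcomp.extremePoints_nonempty hQne
  rw [mem_extremePoints] at hv
  have hvQ : v ∈ Q := hv.1
  refine ⟨v, hvQ.1, ?_, ?_⟩
  · intro u hu
    calc FlowObj A α β γ δ t u ≤ FlowObj A α β γ δ t vmax := hvmax u hu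
      _ = FlowObj A α β γ δ t v := hvQ.2.symm
  · by_contra hnint
    obtain ⟨d, hd0, ε, hε, hp, hm⟩ := exists_perturb A k v hvQ.1 hnint
    have ho1 : FlowObj A α β γ δ t (v + ε • d)
        = FlowObj A α β γ δ t v + ε * FlowObj A α β γ δ t d := flowObj_add_smul A α β γ δ t v d ε
    have hsub : v - ε • d = v + (-ε) • d := by
      ext i
      simp
      ring
    have ho2 : FlowObj A α β γ δ t (v - ε • d)
        = FlowObj A α β γ δ t v + (-ε) * FlowObj A α β γ δ t d := by
      rw [hsub]
      exact flowObj_add_smul A α β γ δ t v d (-ε)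
    have hle1 := hvmax _ hp
    have hle2 := hvmax _ hm
    have hveq : FlowObj A α β γ δ t v = FlowObj A α β γ δ t vmax := hvQ.2
    have h1 : ε * FlowObj A α β γ δ t d ≤ 0 := by rw [ho1] at hle1; linarith
    have h2 : 0 ≤ ε * FlowObj A α β γ δ t d := by rw [ho2] at hle2; linarith
    have hobj0 : FlowObj A α β γ δ t d = 0 :=
      (mul_eq_zero.1 (le_antisymm h1 h2)).resolve_left (ne_of_gt hε)
    have hpQ : v + ε • d ∈ Q := ⟨hp, by rw [Set.mem_setOf_eq, ho1, hobj0, mul_zero, add_zero]; exact hveq⟩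
    have hmQ : v - ε • d ∈ Q := ⟨hm, by rw [Set.mem_setOf_eq, ho2, hobj0, mul_zero, add_zero]; exact hveq⟩
    have hseg : v ∈ openSegment ℝ (v - ε • d) (v + ε • d) := by
      refine ⟨1/2, 1/2, by norm_num, by norm_num, by norm_num, ?_⟩
      ext i
      simp
      ring
    have hcontra := hv.2 _ hmQ _ hpQ hseg
    have hsmul0 : ε • d = 0 := by
      have h := hcontra.2
      have h' : v + ε • d - v = 0 := by rw [h]; simp
      simpa using h'
    exact hd0 ((smul_eq_zero.1 hsmul0).resolve_left (ne_of_gt hε))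


end kernel

section main
variable (A : ℕ) (α β : M → ℝ) (γ : ℕ → ℝ) (δ : ℝ) (t : R → ℝ) (k : R → ℕ)

theorem main_binary_opt (hA : 1 ≤ A) (hγ1 : γ 1 = 0)
    (hγ0 : ∀ d, 1 ≤ d → d ≤ A → 0 ≤ γ d)
    (hγincr : ∀ d, 2 ≤ d → d < A → γ d - γ (d - 1) ≤ γ (d + 1) - γ d)
    (hδ : 0 ≤ δ) (ht : ∀ r, 0 < t r) (hk : ∀ r, 0 < k r) :
    ∃ x, LPkOptimal A (Vhom α β γ δ t) k x ∧ IsBinaryX x := by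
  classical
  obtain ⟨v, hvP, hvopt, hvint⟩ := exists_integral_opt A k α β γ δ t
  obtain ⟨hv0, hvk, hvm, hvr⟩ := hvP
  have hybin : ∀ m r, v (Sum.inl (m, r)) = 0 ∨ v (Sum.inl (m, r)) = 1 := by
    intro m r
    obtain ⟨n, hn⟩ := hvint (Sum.inl (m, r))
    have h0 : (0 : ℝ) ≤ (n : ℝ) := by rw [← hn]; exact hv0 _
    have h1 : (n : ℝ) ≤ 1 := by
      rw [← hn]
      calc v (Sum.inl (m, r)) ≤ ∑ r', v (Sum.inl (m, r')) :=
            Finset.single_le_sum (fun r' _ => hv0 (Sum.inl (m, r'))) (Finset.mem_univ r)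
        _ ≤ 1 := hvm m
    have hn0 : (0 : ℤ) ≤ n := by exact_mod_cast h0
    have hn1 : n ≤ 1 := by exact_mod_cast h1
    interval_cases n
    · left; rw [hn]; norm_num
    · right; rw [hn]; norm_num
  set Mr : R → Finset M := fun r => Finset.univ.filter (fun m => v (Sum.inl (m, r)) = 1) with hMr
  have hyind : ∀ m r, v (Sum.inl (m, r)) = if m ∈ Mr r then (1 : ℝ) else 0 := by
    intro m r
    rw [hMr]
    simp only [Finset.mem_filter, Finset.mem_univ, true_and]
    rcases hybin m r with h | h <;> simp [h]
  have hz : ∀ r j, ∃ c : ℕ, v (Sum.inr (r, j)) = (c : ℝ) ∧ c ≤ k r := by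
    intro r j
    obtain ⟨n, hn⟩ := hvint (Sum.inr (r, j))
    have h0 : (0 : ℝ) ≤ (n : ℝ) := by rw [← hn]; exact hv0 _
    have h1 : (n : ℝ) ≤ (k r : ℝ) := by rw [← hn]; exact hvk r j
    have hn0 : (0 : ℤ) ≤ n := by exact_mod_cast h0
    have hn1 : n ≤ (k r : ℤ) := by exact_mod_cast h1
    refine ⟨n.toNat, ?_, ?_⟩
    · rw [hn]
      congr 1
      omega
    · omega
  choose ζ hζv hζk using hz
  have hR : ∀ r, (∑ m, v (Sum.inl (m, r))) = ((Mr r).card : ℝ) := by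
    intro r
    rw [Finset.sum_congr rfl (fun m _ => hyind m r)]
    rw [Finset.sum_boole]
    congr 1
    rw [hMr]
    congr 1
    ext m
    simp
  have hsumζ : ∀ r, (∑ j : Fin A, ζ r j) = (Mr r).card := by
    intro r
    have hL : (∑ j : Fin A, v (Sum.inr (r, j))) = ((∑ j : Fin A, ζ r j : ℕ) : ℝ) := by
      rw [Finset.sum_congr rfl (fun j _ => hζv r j)]
      push_cast
      ring
    have := hvr r
    rw [hR r, hL] at this
    exact_mod_cast this.symm
  have hMrcard : ∀ r, (Mr r).card ≤ A * k r := by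
    intro r
    rw [← hsumζ r]
    calc (∑ j : Fin A, ζ r j) ≤ ∑ _j : Fin A, k r :=
        Finset.sum_le_sum (fun j _ => hζk r j)
      _ = A * k r := by simp [Finset.sum_const, mul_comm]
  have hpart := fun r => exists_partition A (k r) hA (hk r) γ δ (Mr r) (hMrcard r)
  choose P hPgood hPmem1 hPmem0 hPcard hPval using hpart
  set x : Finset M → R → ℝ := fun b r => if b ∈ P r then 1 else 0 with hx
  have hPsubG : ∀ r b, b ∈ P r → b ∈ Groups M A := by
    intro r b hb
    rw [mem_groups_iff]
    exact ⟨(hPgood r b hb).1, (hPgood r b hb).2.1⟩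
  have hinterP : ∀ r, Groups M A ∩ P r = P r := by
    intro r
    apply Finset.inter_eq_right.2
    intro b hb
    exact hPsubG r b hb
  have hxsum : ∀ (s : Finset (Finset M)) r, (∑ b ∈ s, x b r) = ((s ∩ P r).card : ℝ) := by
    intro s r
    rw [hx]
    dsimp only
    rw [Finset.sum_ite_mem, Finset.sum_const, nsmul_eq_mul, mul_one]
  -- feasibility
  have hfeas : LPkFeasible A k x := by
    refine ⟨?_, ?_, ?_, ?_⟩
    · intro b r
      rw [hx]
      dsimp only
      split <;> norm_num
    · intro b r hb
      rw [hx]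
      dsimp only
      rw [if_neg]
      intro hbP
      exact hb (hPsubG r b hbP)
    · intro m
      have hterm : ∀ r, (∑ b ∈ (Groups M A).filter (fun b => m ∈ b), x b r)
          = (((P r).filter (fun b => m ∈ b)).card : ℝ) := by
        intro r
        rw [hxsum]
        congr 2
        ext b
        simp only [Finset.mem_inter, Finset.mem_filter]
        constructor
        · rintro ⟨⟨_, hmb⟩, hbP⟩
          exact ⟨hbP, hmb⟩
        · rintro ⟨hbP, hmb⟩
          exact ⟨⟨hPsubG r b hbP, hmb⟩, hbP⟩
      rw [Finset.sum_congr rfl (fun r _ => hterm r)]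
      have hcard : ∀ r, (((P r).filter (fun b => m ∈ b)).card : ℝ) = v (Sum.inl (m, r)) := by
        intro r
        rw [hyind m r]
        by_cases hmm : m ∈ Mr r
        · rw [hPmem1 r m hmm, if_pos hmm]
          norm_num
        · rw [hPmem0 r m hmm, if_neg hmm]
          norm_num
      rw [Finset.sum_congr rfl (fun r _ => hcard r)]
      exact hvm m
    · intro r
      rw [hxsum, hinterP r]
      exact_mod_cast hPcard r
  -- objective comparison
  have hobj : FlowObj A α β γ δ t v ≤ LPkObj A (Vhom α β γ δ t) x := by
    have hLP : LPkObj A (Vhom α β γ δ t) x = ∑ r, ∑ b ∈ P r, Vhom α β γ δ t r b := by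
      rw [LPkObj, Finset.sum_comm]
      apply Finset.sum_congr rfl
      intro r _
      rw [hx]
      dsimp only
      rw [Finset.sum_congr rfl (fun b _ => by rw [mul_ite, mul_one, mul_zero])]
      rw [Finset.sum_ite_mem, hinterP r]
    have hFO : FlowObj A α β γ δ t v
        = ∑ r, ((∑ m ∈ Mr r, (α m - β m * t r)) -
            t r * ∑ j : Fin A, Dfc γ δ (j : ℕ) * (ζ r j : ℝ)) := by
      rw [FlowObj, Fintype.sum_sum_type]
      have hYpart : (∑ p : M × R, cvec A α β γ δ t (Sum.inl p) * v (Sum.inl p))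
          = ∑ r, ∑ m ∈ Mr r, (α m - β m * t r) := by
        rw [Fintype.sum_prod_type, Finset.sum_comm]
        apply Finset.sum_congr rfl
        intro r _
        have : ∀ m, cvec A α β γ δ t (Sum.inl (m, r)) * v (Sum.inl (m, r))
            = if m ∈ Mr r then (α m - β m * t r) else 0 := by
          intro m
          rw [hyind m r]
          simp only [cvec]
          split <;> ring
        rw [Finset.sum_congr rfl (fun m _ => this m)]
        rw [Finset.sum_ite_mem, Finset.univ_inter]
      have hZpart : (∑ q : R × Fin A, cvec A α β γ δ t (Sum.inr q) * v (Sum.inr q))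
          = ∑ r, -(t r * ∑ j : Fin A, Dfc γ δ (j : ℕ) * (ζ r j : ℝ)) := by
        rw [Fintype.sum_prod_type]
        apply Finset.sum_congr rfl
        intro r _
        rw [Finset.mul_sum, ← Finset.sum_neg_distrib]
        apply Finset.sum_congr rfl
        intro j _
        rw [hζv r j]
        simp only [cvec]
        ring
      rw [hYpart, hZpart, ← Finset.sum_add_distrib]
      apply Finset.sum_congr rfl
      intro r _
      ring
    rw [hLP, hFO]
    apply Finset.sum_le_sum
    intro r _
    have hw : (∑ b ∈ P r, ∑ m ∈ b, (α m - β m * t r)) = ∑ m ∈ Mr r, (α m - β m * t r) := by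
      have h1 : (∑ b ∈ P r, ∑ m ∈ b, (α m - β m * t r))
          = ∑ b ∈ P r, ∑ m : M, (if m ∈ b then (α m - β m * t r) else 0) := by
        apply Finset.sum_congr rfl
        intro b _
        rw [Finset.sum_ite_mem, Finset.univ_inter]
      rw [h1, Finset.sum_comm]
      have h2 : ∀ m : M, (∑ b ∈ P r, if m ∈ b then (α m - β m * t r) else 0)
          = (((P r).filter (fun b => m ∈ b)).card : ℝ) * (α m - β m * t r) := by
        intro m
        rw [← Finset.sum_filter, Finset.sum_const, nsmul_eq_mul]
      rw [Finset.sum_congr rfl (fun m _ => h2 m)]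
      have h3 : ∀ m : M, (((P r).filter (fun b => m ∈ b)).card : ℝ) * (α m - β m * t r)
          = if m ∈ Mr r then (α m - β m * t r) else 0 := by
        intro m
        by_cases hmm : m ∈ Mr r
        · rw [hPmem1 r m hmm, if_pos hmm]
          norm_num
        · rw [hPmem0 r m hmm, if_neg hmm]
          norm_num
      rw [Finset.sum_congr rfl (fun m _ => h3 m)]
      rw [Finset.sum_ite_mem, Finset.univ_inter]
    have hcost : (∑ b ∈ P r, fc γ δ b.card) ≤ ∑ j : Fin A, Dfc γ δ (j : ℕ) * (ζ r j : ℝ) := by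
      rw [hPval r]
      set zf : ℕ → ℕ := fun j => if h : j < A then ζ r ⟨j, h⟩ else 0 with hzf
      have htrans : (∑ j : Fin A, Dfc γ δ (j : ℕ) * (ζ r j : ℝ))
          = ∑ j ∈ Finset.range A, Dfc γ δ j * (zf j : ℝ) := by
        rw [← Fin.sum_univ_eq_sum_range (fun j => Dfc γ δ j * (zf j : ℝ)) A]
        apply Finset.sum_congr rfl
        intro j _
        rw [hzf]
        simp [j.isLt]
      rw [htrans]
      apply greedy_cost_le A (k r) (Mr r).card (hMrcard r) (Dfc γ δ)
        (fun i hi => Dfc_mono hγ1 hγ0 hγincr i hi) zf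
      · intro j hj
        rw [hzf]
        simp only [hj, dif_pos]
        exact hζk r ⟨j, hj⟩
      · rw [← hsumζ r]
        rw [← Fin.sum_univ_eq_sum_range (fun j => zf j) A]
        apply Finset.sum_congr rfl
        intro j _
        rw [hzf]
        simp [j.isLt]
    have hVsum : (∑ b ∈ P r, Vhom α β γ δ t r b)
        = (∑ m ∈ Mr r, (α m - β m * t r)) - t r * ∑ b ∈ P r, fc γ δ b.card := by
      rw [Finset.sum_congr rfl (fun b _ => Vhom_eq α β γ δ t r b)]
      rw [Finset.sum_sub_distrib, ← Finset.mul_sum, hw]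
    rw [hVsum]
    have := mul_le_mul_of_nonneg_left hcost (le_of_lt (ht r))
    linarith
  refine ⟨x, ⟨hfeas, ?_⟩, ?_⟩
  · intro y hy
    calc LPkObj A (Vhom α β γ δ t) y = FlowObj A α β γ δ t (psi A y) := (psi_obj A α β γ δ t y).symm
      _ ≤ FlowObj A α β γ δ t v := hvopt _ (psi_mem A k y hy)
      _ ≤ LPkObj A (Vhom α β γ δ t) x := hobj
  · intro b r
    rw [hx]
    dsimp only
    split
    · right; rfl
    · left; rfl

end main

end LPkAux

/-- If all riders have homogeneous carpool disutility `γ`, then for any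
finite route set `R*` with travel times `t_r > 0` and positive integer capacities `k*_r` (in
particular the output of the greedy route-capacity allocation), the program (LPk*) has an
optimal solution with all entries in `{0,1}`. -/
theorem lpk_has_binary_optimum_of_homogeneous
    (A : ℕ) (hA : 1 ≤ A) (α β : M → ℝ) (γ : ℕ → ℝ) (δ : ℝ)
    (hγ1 : γ 1 = 0)
    (hγ0 : ∀ d, 1 ≤ d → d ≤ A → 0 ≤ γ d)
    (hγincr : ∀ d, 2 ≤ d → d < A → γ d - γ (d - 1) ≤ γ (d + 1) - γ d)
    (hδ : 0 ≤ δ)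
    (t : R → ℝ) (ht : ∀ r, 0 < t r)
    (k : R → ℕ) (hk : ∀ r, 0 < k r) :
    ∃ x, LPkOptimal A (Vhom α β γ δ t) k x ∧ IsBinaryX x := by
  exact LPkAux.main_binary_opt A α β γ δ t k hA hγ1 hγ0 hγincr hδ ht hk
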